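/- Let p be an odd prime, n and t positive integers, and s = gcd(n, t). If n/s is odd, then the only root of the linearized polynomial x^{p^t} + x in the finite field F_{p^n} is x = 0 (i.e., it has exactly one root). -/
import Mathlib


/-- Let `p` be an odd prime, `n, t` positive integers, `s = gcd(n, t)`. If `n / s` is odd,
then the only root of `x^(p^t) + x` in the finite field with `p^n` elements is `x = 0`,
i.e. it has exactly one root. -/
theorem stmt2 (p : ℕ) (hp : p.Prime) (hpodd : Odd p) (n t : ℕ) (hn : 0 < n) (ht : 0 < t)
    (s : ℕ) (hs : s = Nat.gcd n t) (hodd : Odd (n / s))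
    (F : Type*) [Field F] [Fintype F] [DecidableEq F]
    (hF : Fintype.card F = p ^ n) :
    (∀ x : F, x ^ (p ^ t) + x = 0 ↔ x = 0) ∧
    (Finset.univ.filter (fun x : F => x ^ (p ^ t) + x = 0)).card = 1 := by
  -- characteristic: 2 ≠ 0 in F
  have h2F : (2 : F) ≠ 0 := by
    intro h2
    haveI : Fact (Nat.Prime 2) := ⟨Nat.prime_two⟩
    have hdvd : ringChar F ∣ 2 := (ringChar.spec F 2).mp (by exact_mod_cast h2)
    have hne1 : ringChar F ≠ 1 := CharP.ringChar_ne_one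
    have : ringChar F = 2 := by
      rcases (Nat.dvd_prime Nat.prime_two).mp hdvd with h | h
      · exact absurd h hne1
      · exact h
    have h2card : (2 : ℕ) ∣ Fintype.card F :=
      (prime_dvd_char_iff_dvd_card 2).mp (by rw [this])
    rw [hF] at h2card
    have : (2 : ℕ) ∣ p := Nat.Prime.dvd_of_dvd_pow Nat.prime_two h2card
    have hp2 : p = 2 := ((Nat.prime_dvd_prime_iff_eq Nat.prime_two hp).mp this).symm
    rw [hp2] at hpodd
    exact (Nat.not_odd_iff_even.mpr (even_two)) hpodd
  have hoddpt : Odd (p ^ t) := hpodd.pow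
  have key : ∀ x : F, x ^ (p ^ t) + x = 0 → x = 0 := by
    intro x hx
    have hx' : x ^ p ^ t = -x := eq_neg_of_add_eq_zero_left hx
    have hk : ∀ k : ℕ, x ^ p ^ (k * t) = (-1) ^ k * x := by
      intro k
      induction k with
      | zero => simp
      | succ k ih =>
        have he : p ^ ((k + 1) * t) = p ^ (k * t) * p ^ t := by
          rw [← pow_add]; ring_nf
        rw [he, pow_mul, ih, mul_pow, hx', ← pow_mul, mul_comm k (p ^ t), pow_mul,
          hoddpt.neg_one_pow]
        ring
    have hst : s ∣ t := hs ▸ Nat.gcd_dvd_right n t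
    have hsn : s ∣ n := hs ▸ Nat.gcd_dvd_left n t
    have hs0 : 0 < s := by
      rw [hs]; exact Nat.gcd_pos_of_pos_left t hn
    have hmul : n / s * t = n * (t / s) := by
      obtain ⟨a, ha⟩ := hsn
      obtain ⟨b, hb⟩ := hst
      subst ha hb
      rw [Nat.mul_div_cancel_left a hs0, Nat.mul_div_cancel_left b hs0]
      ring
    have h1 : x ^ p ^ (n / s * t) = -x := by
      rw [hk, hodd.neg_one_pow, neg_one_mul]
    have h2 : x ^ p ^ (n / s * t) = x := by
      rw [hmul, pow_mul, ← hF]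
      exact FiniteField.pow_card_pow (t / s) x
    have : x = -x := h2.symm.trans h1
    have h2x : (2 : F) * x = 0 := by linear_combination this
    rcases mul_eq_zero.mp h2x with h | h
    · exact absurd h h2F
    · exact h
  constructor
  · intro x
    constructor
    · exact key x
    · intro hx; subst hx; simp [zero_pow (pow_ne_zero t hp.pos.ne')]
  · have : (Finset.univ.filter (fun x : F => x ^ (p ^ t) + x = 0)) = {0} := by
      ext x
      simp only [Finset.mem_filter, Finset.mem_univ, true_and, Finset.mem_singleton]
      exact ⟨key x, fun hx => by subst hx; simp [zero_pow (pow_ne_zero t hp.pos.ne')]⟩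
    rw [this, Finset.card_singleton]
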